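/- Let n ≥ 1. The third moment of the complex equatorial stabilizer ensemble satisfies (1/|𝒜ₙ|) Σ_{A ∈ 𝒜ₙ} (φ^{eq}_A (φ^{eq}_A)†)^{⊗3} = (1/8ⁿ) Σ_{(x,y,z,w,s,t) ∈ 𝒦₂} |x y z⟩⟨w s t|, where 𝒦₂ is the set of 6-tuples (x,y,z,w,s,t) of bit strings in {0,1}ⁿ such that (i) there exists a partition of {1,…,6} into three pairs {(i₁,j₁),(i₂,j₂),(i₃,j₃)} with v_{i_k} = v_{j_k} for k = 1,2,3, writing (v₁,…,v₆) = (x,y,z,w,s,t), and (ii) for every coordinate p ∈ {1,…,n}, x_p + y_p + z_p = w_p + s_p + t_p as integers (entries read as 0/1 integers). -/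

import Mathlib

open Finset Matrix

/-- Bit strings of length `n`, with entries viewed as `0/1` integers via `Fin 2`. -/
abbrev Bits (n : ℕ) := Fin n → Fin 2

/-- The index set `𝒜ₙ`: symmetric `n × n` matrices with diagonal entries in `{0,1,2,3}`
and off-diagonal entries in `{0,1}` (encoded inside `Fin 4`). -/
def An (n : ℕ) : Finset (Matrix (Fin n) (Fin n) (Fin 4)) :=
  @Finset.filter _ (fun A => (∀ i j, A i j = A j i) ∧ ∀ i j, i ≠ j → (A i j : ℕ) < 2)
    (fun A => @instDecidableAnd _ _
      (@Nat.decidableForallFin _ _ fun i => @Nat.decidableForallFin _ _ fun j =>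
        instDecidableEqFin 4 (A i j) (A j i)) inferInstance) Finset.univ

/-- The quadratic form `xᵀ A x`, computed in `ℤ` (here in `ℕ`). -/
def quadA {n : ℕ} (A : Matrix (Fin n) (Fin n) (Fin 4)) (x : Bits n) : ℕ :=
  ∑ i, ∑ j, (A i j : ℕ) * (x i : ℕ) * (x j : ℕ)

/-- The complex equatorial stabilizer state `φ^{eq}_A`. -/
noncomputable def phiEq {n : ℕ} (A : Matrix (Fin n) (Fin n) (Fin 4)) (x : Bits n) : ℂ :=
  Complex.I ^ quadA A x / (Real.sqrt (2 ^ n) : ℂ)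

/-- The rank-one projector `φ φ†` onto a vector `φ`. -/
noncomputable def outer {ι : Type*} (φ : ι → ℂ) : Matrix ι ι ℂ :=
  Matrix.of fun x y => φ x * (starRingEnd ℂ) (φ y)

/-- The Kronecker (tensor) cube of a matrix, indexed by triples. -/
def kron3 {ι : Type*} (M : Matrix ι ι ℂ) : Matrix (ι × ι × ι) (ι × ι × ι) ℂ :=
  Matrix.of fun p q => M p.1 q.1 * M p.2.1 q.2.1 * M p.2.2 q.2.2

/-- A 6-tuple `v` is "paired" if `{1,…,6}` partitions into three pairs on which `v`
agrees; equivalently there is a fixed-point-free involution `σ` of `Fin 6` with `v ∘ σ = v`. -/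
def Paired {α : Type*} (v : Fin 6 → α) : Prop :=
  ∃ σ : Equiv.Perm (Fin 6), (∀ k, σ k ≠ k) ∧ (∀ k, σ (σ k) = k) ∧ (∀ k, v (σ k) = v k)

instance {α : Type*} [DecidableEq α] (v : Fin 6 → α) : Decidable (Paired v) := by
  unfold Paired; infer_instance

/-- Membership in `𝒦₂`: the tuple is paired, and moreover for every coordinate `p`
the integer sums `x_p + y_p + z_p` and `w_p + s_p + t_p` agree. -/
def MemK2 {n : ℕ} (v : Fin 6 → Bits n) : Prop :=
  Paired v ∧ ∀ p : Fin n,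
    (v 0 p : ℕ) + (v 1 p : ℕ) + (v 2 p : ℕ) = (v 3 p : ℕ) + (v 4 p : ℕ) + (v 5 p : ℕ)

instance {n : ℕ} (v : Fin 6 → Bits n) : Decidable (MemK2 v) := by
  unfold MemK2; infer_instance


set_option maxHeartbeats 1000000
set_option synthInstance.maxHeartbeats 400000
set_option maxRecDepth 100000
set_option synthInstance.maxSize 2000

namespace EspAux


def β (b : Fin 2) : ZMod 4 := ((b : ℕ) : ZMod 4)
def γ (b : Fin 2) : ZMod 2 := ((b : ℕ) : ZMod 2)
def odd3 (a b c : Fin 2) : Fin 3 := if b = c then 0 else if a = c then 1 else 2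
def maj3 (a b c : Fin 2) : Fin 2 := if a = b then a else c
def pick3 (a b c : Fin 2) : Fin 3 → Fin 2 := ![a, b, c]
abbrev sumEq6 (a b c d e f : Fin 2) : Prop := (a : ℕ) + b + c = (d : ℕ) + e + f
abbrev par12 (a b c d e f a' b' c' d' e' f' : Fin 2) : Prop :=
  2 * (β a * β a' + β b * β b' + β c * β c' + 3 * (β d * β d' + β e * β e' + β f * β f')) = 0

theorem L0 : ∀ a b c d e f : Fin 2, sumEq6 a b c d e f → (a = b ∧ a = c) →
    d = a ∧ e = a ∧ f = a := by decide

theorem L1 : ∀ a b c d e f a' b' c' d' e' f' : Fin 2,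
    sumEq6 a b c d e f → sumEq6 a' b' c' d' e' f' →
    ¬(a = b ∧ a = c) → ¬(a' = b' ∧ a' = c') →
    par12 a b c d e f a' b' c' d' e' f' →
    (odd3 a b c = odd3 a' b' c' ↔ odd3 d e f = odd3 d' e' f') := by decide

theorem L2 : ∀ a b c d e f a' b' c' d' e' f' : Fin 2,
    sumEq6 a b c d e f → sumEq6 a' b' c' d' e' f' →
    ¬(a = b ∧ a = c) → ¬(a' = b' ∧ a' = c') →
    par12 a b c d e f a' b' c' d' e' f' →
    pick3 a' b' c' (odd3 a b c) = pick3 d' e' f' (odd3 d e f) := by decide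

theorem L3 : ∀ a b c d e f : Fin 2, sumEq6 a b c d e f → ¬(a = b ∧ a = c) →
    pick3 a b c (odd3 a b c) = pick3 d e f (odd3 d e f) := by decide

theorem L4 : ∀ a b c d e f : Fin 2, sumEq6 a b c d e f → maj3 a b c = maj3 d e f := by decide

theorem L5 : ∀ (a b c : Fin 2) (k : Fin 3), ¬(a = b ∧ a = c) → k ≠ odd3 a b c →
    pick3 a b c k = maj3 a b c := by decide

theorem L6 : ∀ a b c d e f : Fin 2, sumEq6 a b c d e f → ¬(a = b ∧ a = c) →
    ¬(d = e ∧ d = f) := by decide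

theorem Ldiag : ∀ a b c d e f : Fin 2,
    (β a * β a + β b * β b + β c * β c + 3 * (β d * β d + β e * β e + β f * β f) = 0)
      ↔ sumEq6 a b c d e f := by decide

theorem B1 : ∀ a b c d e f a' b' c' d' e' f' : Fin 2,
    par12 a b c d e f a' b' c' d' e' f'
      ↔ (γ a * γ a' + γ b * γ b' + γ c * γ c' + γ d * γ d' + γ e * γ e' + γ f * γ f' = 0) := by
  decide

theorem permExtend : ∀ R : Fin 3 → Fin 3 → Bool,
    (∀ i j j', R i j → R i j' → j = j') →
    (∀ i i' j, R i j → R i' j → i = i') →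
    ∃ π : Equiv.Perm (Fin 3), ∀ i j, R i j → π i = j := by decide

section Comb
variable {n : ℕ} (x y z w s t : Bits n)

lemma pickK (q : Fin n) : ∀ i : Fin 3, pick3 (x q) (y q) (z q) i = ![x, y, z] i q := by
  intro i; fin_cases i <;> rfl

lemma pickB (q : Fin n) : ∀ j : Fin 3, pick3 (w q) (s q) (t q) j = ![w, s, t] j q := by
  intro j; fin_cases j <;> rfl

theorem Lconst : ∀ (a b c d e f : Fin 2) (k l : Fin 3), sumEq6 a b c d e f →
    (a = b ∧ a = c) → pick3 a b c k = pick3 d e f l := by decide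

lemma cross
    (hs : ∀ p, sumEq6 (x p) (y p) (z p) (w p) (s p) (t p))
    (hp : ∀ p q, p ≠ q → par12 (x p) (y p) (z p) (w p) (s p) (t p)
      (x q) (y q) (z q) (w q) (s q) (t q)) :
    ∃ π : Equiv.Perm (Fin 3), ∀ i, ![x, y, z] i = ![w, s, t] (π i) := by
  classical
  let nc : Fin n → Prop := fun p => ¬(x p = y p ∧ x p = z p)
  let oK : Fin n → Fin 3 := fun p => odd3 (x p) (y p) (z p)
  let oB : Fin n → Fin 3 := fun p => odd3 (w p) (s p) (t p)
  let Rp : Fin 3 → Fin 3 → Prop := fun i j => ∃ p, nc p ∧ oK p = i ∧ oB p = j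
  have hRpdec : ∀ i j, Decidable (Rp i j) := fun i j => by
    unfold Rp nc oK oB; infer_instance
  have hncB : ∀ p, nc p → ¬(w p = s p ∧ w p = t p) := fun p h => L6 _ _ _ _ _ _ (hs p) h
  have hlink : ∀ i j, Rp i j → ∀ q, pick3 (x q) (y q) (z q) i = pick3 (w q) (s q) (t q) j := by
    rintro i j ⟨p, hnc, hip, hjp⟩ q
    by_cases hcq : x q = y q ∧ x q = z q
    · exact Lconst _ _ _ _ _ _ i j (hs q) hcq
    · by_cases hpq : p = q
      · subst hpq; rw [← hip, ← hjp]; exact L3 _ _ _ _ _ _ (hs p) hnc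
      · rw [← hip, ← hjp]
        exact L2 _ _ _ _ _ _ _ _ _ _ _ _ (hs p) (hs q) hnc hcq (hp p q hpq)
  have hfun : ∀ i j j', Rp i j → Rp i j' → j = j' := by
    rintro i j j' ⟨p, hnc, hip, hjp⟩ ⟨p', hnc', hip', hjp'⟩
    by_cases hpp : p = p'
    · subst hpp; rw [← hjp, ← hjp']
    · have hk : oK p = oK p' := hip.trans hip'.symm
      have := (L1 _ _ _ _ _ _ _ _ _ _ _ _ (hs p) (hs p') hnc hnc' (hp p p' hpp)).mp hk
      rw [← hjp, ← hjp']; exact this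
  have hinj : ∀ i i' j, Rp i j → Rp i' j → i = i' := by
    rintro i i' j ⟨p, hnc, hip, hjp⟩ ⟨p', hnc', hip', hjp'⟩
    by_cases hpp : p = p'
    · subst hpp; rw [← hip, ← hip']
    · have hb : oB p = oB p' := hjp.trans hjp'.symm
      have := (L1 _ _ _ _ _ _ _ _ _ _ _ _ (hs p) (hs p') hnc hnc' (hp p p' hpp)).mpr hb
      rw [← hip, ← hip']; exact this
  let R : Fin 3 → Fin 3 → Bool := fun i j => @decide (Rp i j) (hRpdec i j)
  obtain ⟨π, hπ⟩ := permExtend R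
    (fun i j j' h h' => hfun i j j' (of_decide_eq_true h) (of_decide_eq_true h'))
    (fun i i' j h h' => hinj i i' j (of_decide_eq_true h) (of_decide_eq_true h'))
  have hπ' : ∀ i j, Rp i j → π i = j := fun i j h =>
    hπ i j (by unfold R; exact decide_eq_true h)
  refine ⟨π, fun i => ?_⟩
  by_cases hex : ∃ p, nc p ∧ oK p = i
  · obtain ⟨p, hnc, hip⟩ := hex
    have hR : Rp i (oB p) := ⟨p, hnc, hip, rfl⟩
    rw [hπ' _ _ hR]
    funext q; rw [← pickK, ← pickB]; exact hlink i (oB p) hR q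
  · have hnotB : ∀ p, nc p → oB p ≠ π i := by
      intro p hnc heq
      have hR : Rp (oK p) (π i) := ⟨p, hnc, rfl, heq⟩
      have h2 : oK p = i := π.injective (hπ' _ _ hR)
      exact hex ⟨p, hnc, h2⟩
    funext q; rw [← pickK, ← pickB]
    by_cases hcq : x q = y q ∧ x q = z q
    · exact Lconst _ _ _ _ _ _ i (π i) (hs q) hcq
    · have h1 : pick3 (x q) (y q) (z q) i = maj3 (x q) (y q) (z q) :=
        L5 _ _ _ i hcq (fun h => hex ⟨q, hcq, h.symm⟩)
      have h2 : pick3 (w q) (s q) (t q) (π i) = maj3 (w q) (s q) (t q) :=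
        L5 _ _ _ (π i) (hncB q hcq) (fun h => hnotB q hcq h.symm)
      rw [h1, h2, L4 _ _ _ _ _ _ (hs q)]

lemma crossToPaired (π : Equiv.Perm (Fin 3))
    (h : ∀ i, ![x, y, z] i = ![w, s, t] (π i)) :
    Paired ![x, y, z, w, s, t] := by
  have hV1 : ∀ (i : Fin 3) (hh : (i : ℕ) < 6),
      (![x, y, z, w, s, t] : Fin 6 → Bits n) ⟨i, hh⟩ = ![x, y, z] i := by
    intro i hh; fin_cases i <;> rfl
  have hV2 : ∀ (j : Fin 3) (hh : 3 + (j : ℕ) < 6),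
      (![x, y, z, w, s, t] : Fin 6 → Bits n) ⟨3 + j, hh⟩ = ![w, s, t] j := by
    intro j hh; fin_cases j <;> rfl
  let g : Fin 6 → Fin 6 := fun k =>
    if h3 : (k : ℕ) < 3 then
      ⟨3 + (π ⟨k, h3⟩ : ℕ), by have := (π ⟨(k : ℕ), h3⟩).isLt; omega⟩
    else
      ⟨(π.symm ⟨(k : ℕ) - 3, by have := k.isLt; omega⟩ : ℕ), by
        have := (π.symm ⟨(k : ℕ) - 3, by have := k.isLt; omega⟩).isLt; omega⟩
  have hgval1 : ∀ (k : Fin 6) (h3 : (k : ℕ) < 3), (g k : ℕ) = 3 + (π ⟨k, h3⟩ : ℕ) := by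
    intro k h3; simp only [g, dif_pos h3]
  have hgval2 : ∀ (k : Fin 6) (h3 : ¬(k : ℕ) < 3) (hlt : (k : ℕ) - 3 < 3),
      (g k : ℕ) = (π.symm ⟨(k : ℕ) - 3, hlt⟩ : ℕ) := by
    intro k h3 hlt; simp only [g, dif_neg h3]
  have hg : ∀ k, g (g k) = k := by
    intro k
    by_cases h3 : (k : ℕ) < 3
    · have e1 : (g k : ℕ) = 3 + (π ⟨k, h3⟩ : ℕ) := hgval1 k h3
      have h4 : ¬(g k : ℕ) < 3 := by omega
      have hpf : (g k : ℕ) - 3 < 3 := by have := (π ⟨(k : ℕ), h3⟩).isLt; omega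
      apply Fin.ext
      rw [hgval2 (g k) h4 hpf]
      have e2 : (⟨(g k : ℕ) - 3, hpf⟩ : Fin 3) = π ⟨(k : ℕ), h3⟩ := by
        apply Fin.ext; simp only [e1]; omega
      rw [e2, Equiv.symm_apply_apply]
    · have hlt : (k : ℕ) - 3 < 3 := by have := k.isLt; omega
      have e1 : (g k : ℕ) = (π.symm ⟨(k : ℕ) - 3, hlt⟩ : ℕ) := hgval2 k h3 hlt
      have h4 : (g k : ℕ) < 3 := by rw [e1]; exact (π.symm _).isLt
      apply Fin.ext
      rw [hgval1 (g k) h4]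
      have e2 : (⟨(g k : ℕ), h4⟩ : Fin 3) = π.symm ⟨(k : ℕ) - 3, hlt⟩ := by
        apply Fin.ext; exact e1
      rw [e2, Equiv.apply_symm_apply]
      show 3 + ((k : ℕ) - 3) = (k : ℕ)
      have := k.isLt; omega
  have hfp : ∀ k, g k ≠ k := by
    intro k hk
    have hv := congrArg Fin.val hk
    by_cases h3 : (k : ℕ) < 3
    · rw [hgval1 k h3] at hv; omega
    · have hlt : (k : ℕ) - 3 < 3 := by have := k.isLt; omega
      rw [hgval2 k h3 hlt] at hv
      have := (π.symm (⟨(k : ℕ) - 3, hlt⟩ : Fin 3)).isLt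
      omega
  have hv : ∀ k, (![x, y, z, w, s, t] : Fin 6 → Bits n) (g k) =
      (![x, y, z, w, s, t] : Fin 6 → Bits n) k := by
    intro k
    set V : Fin 6 → Bits n := ![x, y, z, w, s, t] with hVdef
    by_cases h3 : (k : ℕ) < 3
    · have hπlt := (π ⟨(k : ℕ), h3⟩).isLt
      have e1 : g k = ⟨3 + (π ⟨(k : ℕ), h3⟩ : ℕ), by omega⟩ := Fin.ext (hgval1 k h3)
      have e2 : k = ⟨((⟨(k : ℕ), h3⟩ : Fin 3) : ℕ), by have := k.isLt; omega⟩ := Fin.ext rfl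
      calc V (g k) = V ⟨3 + (π ⟨(k : ℕ), h3⟩ : ℕ), by omega⟩ := congrArg V e1
        _ = ![w, s, t] (π ⟨(k : ℕ), h3⟩) := hV2 _ _
        _ = ![x, y, z] ⟨(k : ℕ), h3⟩ := (h _).symm
        _ = V ⟨((⟨(k : ℕ), h3⟩ : Fin 3) : ℕ), by have := k.isLt; omega⟩ := (hV1 _ _).symm
        _ = V k := (congrArg V e2).symm
    · have hlt : (k : ℕ) - 3 < 3 := by have := k.isLt; omega
      have hπlt := (π.symm (⟨(k : ℕ) - 3, hlt⟩ : Fin 3)).isLt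
      have e1 : g k = ⟨((π.symm ⟨(k : ℕ) - 3, hlt⟩ : Fin 3) : ℕ), by omega⟩ :=
        Fin.ext (hgval2 k h3 hlt)
      have e2 : k = ⟨3 + ((⟨(k : ℕ) - 3, hlt⟩ : Fin 3) : ℕ), by have := k.isLt; omega⟩ := by
        apply Fin.ext; simp only []; have := k.isLt
        show (k : ℕ) = 3 + ((k : ℕ) - 3); omega
      calc V (g k) = V ⟨((π.symm ⟨(k : ℕ) - 3, hlt⟩ : Fin 3) : ℕ), by omega⟩ := congrArg V e1
        _ = ![x, y, z] (π.symm ⟨(k : ℕ) - 3, hlt⟩) := hV1 _ _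
        _ = ![w, s, t] (π (π.symm ⟨(k : ℕ) - 3, hlt⟩)) := h _
        _ = ![w, s, t] ⟨(k : ℕ) - 3, hlt⟩ := by rw [Equiv.apply_symm_apply]
        _ = V ⟨3 + ((⟨(k : ℕ) - 3, hlt⟩ : Fin 3) : ℕ), by have := k.isLt; omega⟩ := (hV2 _ _).symm
        _ = V k := (congrArg V e2).symm
  exact ⟨Function.Involutive.toPerm g hg, hfp, hg, hv⟩

lemma zmod2_add_self : ∀ u : ZMod 2, u + u = 0 := by decide

lemma pairedToPar (hP : Paired ![x, y, z, w, s, t]) (p q : Fin n) :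
    par12 (x p) (y p) (z p) (w p) (s p) (t p) (x q) (y q) (z q) (w q) (s q) (t q) := by
  obtain ⟨σ, hfp, hinv, hv⟩ := hP
  rw [B1]
  have hsum : ∑ k : Fin 6,
      γ ((![x, y, z, w, s, t] : Fin 6 → Bits n) k p) * γ (![x, y, z, w, s, t] k q) = 0 :=
    Finset.sum_ninvolution (⇑σ)
      (fun a => by rw [hv a]; exact zmod2_add_self _)
      (fun a _ => hfp a) (fun a => Finset.mem_univ _) hinv
  rw [Fin.sum_univ_six] at hsum
  exact hsum

noncomputable def χ (a : ZMod 4) : ℂ := Complex.I ^ a.val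
def β4 (a : Fin 4) : ZMod 4 := ((a : ℕ) : ZMod 4)
def β2 (a : Fin 2) : ZMod 4 := ((a : ℕ) : ZMod 4)

lemma I_pow_mod (m : ℕ) : (Complex.I : ℂ) ^ (m % 4) = Complex.I ^ m := by
  conv_rhs => rw [← Nat.div_add_mod m 4]
  rw [pow_add, pow_mul, Complex.I_pow_four, one_pow, one_mul]

lemma χ_natCast (m : ℕ) : χ ((m : ZMod 4)) = Complex.I ^ m := by
  rw [χ, ZMod.val_natCast, I_pow_mod]

lemma χ_add (a b : ZMod 4) : χ (a + b) = χ a * χ b := by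
  rw [χ, ZMod.val_add, I_pow_mod, pow_add]; rfl

lemma χ_zero : χ 0 = 1 := by
  rw [χ, show (0 : ZMod 4).val = 0 from rfl, pow_zero]

lemma χ_one : χ 1 = Complex.I := by
  rw [χ, show (1 : ZMod 4).val = 1 from rfl, pow_one]

lemma χ_two : χ 2 = -1 := by
  rw [χ, show (2 : ZMod 4).val = 2 from rfl, Complex.I_sq]

lemma χ_three : χ 3 = -Complex.I := by
  rw [χ, show (3 : ZMod 4).val = 3 from rfl, pow_succ, Complex.I_sq]; ring

lemma χ_sum {ι : Type*} (sf : Finset ι) (f : ι → ZMod 4) :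
    χ (∑ i ∈ sf, f i) = ∏ i ∈ sf, χ (f i) := by
  induction sf using Finset.cons_induction with
  | empty => simpa using χ_zero
  | cons a sfin ha ih => rw [Finset.sum_cons, Finset.prod_cons, χ_add, ih]

lemma zmod4_cases : ∀ c : ZMod 4, c = 0 ∨ c = 1 ∨ c = 2 ∨ c = 3 := by decide

lemma sum_chi4 (c : ZMod 4) :
    ∑ a : Fin 4, χ (β4 a * c) = if c = 0 then 4 else 0 := by
  rw [Fin.sum_univ_four]
  rcases zmod4_cases c with h | h | h | h <;> subst h
  · rw [if_pos rfl]
    rw [show β4 0 * 0 = 0 from by decide, show β4 1 * 0 = 0 from by decide,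
      show β4 2 * 0 = 0 from by decide, show β4 3 * 0 = 0 from by decide, χ_zero]; norm_num
  · rw [if_neg (by decide)]
    rw [show β4 0 * 1 = 0 from by decide, show β4 1 * 1 = 1 from by decide,
      show β4 2 * 1 = 2 from by decide, show β4 3 * 1 = 3 from by decide,
      χ_zero, χ_one, χ_two, χ_three]; ring
  · rw [if_neg (by decide)]
    rw [show β4 0 * 2 = 0 from by decide, show β4 1 * 2 = 2 from by decide,
      show β4 2 * 2 = 0 from by decide, show β4 3 * 2 = 2 from by decide,
      χ_zero, χ_two]; ring
  · rw [if_neg (by decide)]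
    rw [show β4 0 * 3 = 0 from by decide, show β4 1 * 3 = 3 from by decide,
      show β4 2 * 3 = 2 from by decide, show β4 3 * 3 = 1 from by decide,
      χ_zero, χ_one, χ_two, χ_three]; ring

lemma sum_chi2 (c : ZMod 4) :
    ∑ a : Fin 2, χ (β2 a * (2 * c)) = if 2 * c = 0 then 2 else 0 := by
  rw [Fin.sum_univ_two]
  rcases zmod4_cases c with h | h | h | h <;> subst h
  · rw [if_pos (by decide), show β2 0 * (2 * 0) = 0 from by decide,
      show β2 1 * (2 * 0) = 0 from by decide, χ_zero]; norm_num
  · rw [if_neg (by decide), show β2 0 * (2 * 1) = 0 from by decide,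
      show β2 1 * (2 * 1) = 2 from by decide, χ_zero, χ_two]; ring
  · rw [if_pos (by decide), show β2 0 * (2 * 2) = 0 from by decide,
      show β2 1 * (2 * 2) = 0 from by decide, χ_zero]; norm_num
  · rw [if_neg (by decide), show β2 0 * (2 * 3) = 0 from by decide,
      show β2 1 * (2 * 3) = 2 from by decide, χ_zero, χ_two]; ring

lemma prod_ite_all {ι : Type*} [Fintype ι] (P : ι → Prop) [DecidablePred P] (c : ℂ) :
    (∏ i : ι, if P i then c else 0) = if ∀ i, P i then c ^ (Fintype.card ι) else 0 := by
  by_cases h : ∀ i, P i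
  · rw [if_pos h, Finset.prod_congr rfl (fun i _ => if_pos (h i)), Finset.prod_const,
      Finset.card_univ]
  · rw [if_neg h]
    push_neg at h
    obtain ⟨i, hi⟩ := h
    exact Finset.prod_eq_zero (Finset.mem_univ i) (if_neg hi)


abbrev SOff (n : ℕ) := {p : Fin n × Fin n // p.1 < p.2}

def mk (d : Fin n → Fin 4) (u : SOff n → Fin 2) : Matrix (Fin n) (Fin n) (Fin 4) :=
  Matrix.of fun i j =>
    if h : i < j then Fin.castLE (by norm_num) (u ⟨(i, j), h⟩)
    else if h' : j < i then Fin.castLE (by norm_num) (u ⟨(j, i), h'⟩)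
    else d i

lemma mk_diag (d : Fin n → Fin 4) (u : SOff n → Fin 2) (i : Fin n) : mk d u i i = d i := by
  simp [mk]

lemma mk_off (d : Fin n → Fin 4) (u : SOff n → Fin 2) {i j : Fin n} (h : i < j) :
    mk d u i j = Fin.castLE (by norm_num) (u ⟨(i, j), h⟩) := by
  simp [mk, h]

lemma mk_off' (d : Fin n → Fin 4) (u : SOff n → Fin 2) {i j : Fin n} (h : i < j) :
    mk d u j i = Fin.castLE (by norm_num) (u ⟨(i, j), h⟩) := by
  simp [mk, h, asymm h]

lemma mk_mem (d : Fin n → Fin 4) (u : SOff n → Fin 2) : mk d u ∈ An n := by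
  rw [An, @Finset.mem_filter _ _ (_) _ _]
  refine ⟨Finset.mem_univ _, fun i j => ?_, fun i j hne => ?_⟩
  · rcases lt_trichotomy i j with h | h | h
    · rw [mk_off d u h, mk_off' d u h]
    · subst h; rfl
    · rw [mk_off d u h, mk_off' d u h]
  · rcases lt_trichotomy i j with h | h | h
    · rw [mk_off d u h]; exact (u ⟨(i, j), h⟩).isLt
    · exact absurd h hne
    · rw [mk_off' d u h]; exact (u ⟨(j, i), h⟩).isLt

def ext2 (A : Matrix (Fin n) (Fin n) (Fin 4)) (q : SOff n) : Fin 2 :=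
  ⟨min (A q.1.1 q.1.2 : ℕ) 1, by omega⟩

lemma mk_extract (A : Matrix (Fin n) (Fin n) (Fin 4)) (hA : A ∈ An n) :
    mk (fun k => A k k) (ext2 A) = A := by
  have hsym := ((@Finset.mem_filter _ _ (_) _ _).mp hA).2.1
  have hoff := ((@Finset.mem_filter _ _ (_) _ _).mp hA).2.2
  ext i j
  rcases lt_trichotomy i j with h | h | h
  · rw [mk_off _ _ h]
    show min (A i j : ℕ) 1 = (A i j : ℕ)
    have := hoff i j (ne_of_lt h); omega
  · subst h; rw [mk_diag]
  · rw [mk_off' _ _ h]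
    show min (A j i : ℕ) 1 = (A i j : ℕ)
    have := hoff j i (ne_of_lt h)
    rw [hsym i j]; omega

lemma sum_An {M : Type*} [AddCommMonoid M] (F : Matrix (Fin n) (Fin n) (Fin 4) → M) :
    ∑ A ∈ An n, F A = ∑ p : (Fin n → Fin 4) × (SOff n → Fin 2), F (mk p.1 p.2) := by
  apply Finset.sum_bij'
    (i := fun A _ => ((fun k => A k k, ext2 A) : (Fin n → Fin 4) × (SOff n → Fin 2)))
    (j := fun p _ => mk p.1 p.2)
    (hi := fun A hA => Finset.mem_univ _)
    (hj := fun p _ => mk_mem p.1 p.2)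
  · intro A hA
    exact mk_extract A hA
  · intro p _
    refine Prod.ext ?_ ?_
    · funext k; exact mk_diag p.1 p.2 k
    · funext q
      apply Fin.ext
      show min ((mk p.1 p.2 q.1.1 q.1.2 : ℕ)) 1 = (p.2 q : ℕ)
      rw [mk_off p.1 p.2 q.2]
      have e1 : (⟨(q.1.1, q.1.2), q.2⟩ : SOff n) = q := Subtype.ext rfl
      rw [e1]
      show min ((p.2 q : ℕ)) 1 = (p.2 q : ℕ)
      have := (p.2 q).isLt; omega
  · intro A hA
    exact (congrArg F (mk_extract A hA)).symm

lemma card_An : ((An n).card : ℂ) = 4 ^ n * 2 ^ (Fintype.card (SOff n)) := by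
  have h1 : (An n).card = Fintype.card ((Fin n → Fin 4) × (SOff n → Fin 2)) := by
    rw [Finset.card_eq_sum_ones, sum_An (M := ℕ) (fun _ => 1)]
    simp [Finset.card_univ]
  rw [h1, Fintype.card_prod, Fintype.card_fun, Fintype.card_fun, Fintype.card_fin,
    Fintype.card_fin]
  simp only [Fintype.card_fin]
  push_cast
  ring

lemma sum_split (f : Fin n → Fin n → ZMod 4) :
    ∑ i, ∑ j, f i j = (∑ i, f i i) + ∑ p : SOff n, (f p.1.1 p.1.2 + f p.1.2 p.1.1) := by
  classical
  have h0 : ∑ i, ∑ j, f i j = ∑ p : Fin n × Fin n, f p.1 p.2 := by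
    rw [← Finset.univ_product_univ, Finset.sum_product]
  rw [h0, ← Finset.sum_filter_add_sum_filter_not Finset.univ (fun p : Fin n × Fin n => p.1 = p.2)]
  have hdiag : ∑ p ∈ Finset.univ.filter (fun p : Fin n × Fin n => p.1 = p.2), f p.1 p.2
      = ∑ i, f i i := by
    apply Finset.sum_bij' (i := fun (p : Fin n × Fin n) _ => p.1)
      (j := fun i _ => ((i, i) : Fin n × Fin n))
      (hi := fun p hp => Finset.mem_univ _)
      (hj := fun i _ => by simp)
    · intro p hp
      have h := (Finset.mem_filter.mp hp).2
      exact Prod.ext rfl h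
    · intro i _; rfl
    · intro p hp
      have h := (Finset.mem_filter.mp hp).2
      rw [← h]
  rw [hdiag]
  congr 1
  have hsplit2 : (Finset.univ.filter (fun p : Fin n × Fin n => ¬p.1 = p.2))
      = (Finset.univ.filter (fun p : Fin n × Fin n => p.1 < p.2)) ∪
        (Finset.univ.filter (fun p : Fin n × Fin n => p.2 < p.1)) := by
    ext p
    simp only [Finset.mem_filter, Finset.mem_union, Finset.mem_univ, true_and]
    constructor
    · intro h; exact lt_or_gt_of_ne h
    · rintro (h | h)
      · exact ne_of_lt h
      · exact (ne_of_lt h).symm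
  have hdisj : Disjoint (Finset.univ.filter (fun p : Fin n × Fin n => p.1 < p.2))
      (Finset.univ.filter (fun p : Fin n × Fin n => p.2 < p.1)) := by
    rw [Finset.disjoint_filter]
    intro p _ h1 h2
    exact lt_asymm h1 h2
  rw [hsplit2, Finset.sum_union hdisj]
  have hswap : ∑ p ∈ Finset.univ.filter (fun p : Fin n × Fin n => p.2 < p.1), f p.1 p.2
      = ∑ p ∈ Finset.univ.filter (fun p : Fin n × Fin n => p.1 < p.2), f p.2 p.1 := by
    apply Finset.sum_bij' (i := fun (p : Fin n × Fin n) _ => Prod.swap p)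
      (j := fun (p : Fin n × Fin n) _ => Prod.swap p)
      (hi := fun p hp => by
        simp only [Finset.mem_filter, Finset.mem_univ, true_and] at hp ⊢
        exact hp)
      (hj := fun p hp => by
        simp only [Finset.mem_filter, Finset.mem_univ, true_and] at hp ⊢
        exact hp)
    · intro p _; exact Prod.swap_swap p
    · intro p _; exact Prod.swap_swap p
    · intro p _; rfl
  rw [hswap, ← Finset.sum_add_distrib]
  exact Finset.sum_subtype _ (by intro p; simp) _


def cc (i j : Fin n) : ZMod 4 :=
  β (x i) * β (x j) + β (y i) * β (y j) + β (z i) * β (z j) +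
    3 * (β (w i) * β (w j) + β (s i) * β (s j) + β (t i) * β (t j))

lemma cc_symm (i j : Fin n) : cc x y z w s t i j = cc x y z w s t j i := by
  unfold cc; ring

def NN (A : Matrix (Fin n) (Fin n) (Fin 4)) : ℕ :=
  quadA A x + quadA A y + quadA A z + 3 * (quadA A w + quadA A s + quadA A t)

lemma quad_cast (A : Matrix (Fin n) (Fin n) (Fin 4)) (v : Fin n → Fin 2) :
    ((quadA A v : ℕ) : ZMod 4) = ∑ i, ∑ j, β4 (A i j) * (β (v i) * β (v j)) := by
  unfold quadA
  push_cast
  refine Finset.sum_congr rfl fun i _ => ?_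
  refine Finset.sum_congr rfl fun j _ => ?_
  unfold β4 β
  push_cast
  ring

lemma NN_cast (A : Matrix (Fin n) (Fin n) (Fin 4)) :
    ((NN x y z w s t A : ℕ) : ZMod 4) = ∑ i, ∑ j, β4 (A i j) * cc x y z w s t i j := by
  unfold NN
  push_cast
  rw [quad_cast A x, quad_cast A y, quad_cast A z, quad_cast A w, quad_cast A s, quad_cast A t]
  simp only [mul_add, Finset.mul_sum, ← Finset.sum_add_distrib]
  refine Finset.sum_congr rfl fun i _ => ?_
  refine Finset.sum_congr rfl fun j _ => ?_
  unfold cc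
  ring

lemma sum_I_NN :
    ∑ A ∈ An n, (Complex.I ^ NN x y z w s t A)
      = if (∀ i, cc x y z w s t i i = 0) ∧
            (∀ p : SOff n, 2 * cc x y z w s t p.1.1 p.1.2 = 0)
          then ((An n).card : ℂ) else 0 := by
  classical
  rw [sum_An]
  have key : ∀ (d : Fin n → Fin 4) (u : SOff n → Fin 2),
      Complex.I ^ NN x y z w s t (mk d u)
        = (∏ i, χ (β4 (d i) * cc x y z w s t i i)) *
          (∏ p : SOff n, χ (β2 (u p) * (2 * cc x y z w s t p.1.1 p.1.2))) := by
    intro d u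
    rw [← χ_natCast, NN_cast x y z w s t (mk d u),
      sum_split (fun i j => β4 (mk d u i j) * cc x y z w s t i j), χ_add, χ_sum, χ_sum]
    congr 1
    · refine Finset.prod_congr rfl fun i _ => ?_
      rw [mk_diag]
    · refine Finset.prod_congr rfl fun p _ => ?_
      congr 1
      rw [mk_off d u p.2, mk_off' d u p.2]
      have hp' : (⟨(p.1.1, p.1.2), p.2⟩ : SOff n) = p := Subtype.ext rfl
      rw [hp']
      have hββ : β4 (Fin.castLE (by norm_num) (u p)) = β2 (u p) := by
        unfold β4 β2; rw [Fin.coe_castLE]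
      rw [hββ, cc_symm x y z w s t p.1.2 p.1.1]
      ring
  rw [Finset.sum_congr rfl (fun p _ => key p.1 p.2)]
  rw [Fintype.sum_prod_type]
  dsimp only
  rw [← Finset.sum_mul_sum]
  rw [← Fintype.piFinset_univ (α := Fin n)]
  rw [Finset.sum_prod_piFinset Finset.univ (fun i a => χ (β4 a * cc x y z w s t i i))]
  rw [← Fintype.piFinset_univ (α := SOff n)]
  rw [Finset.sum_prod_piFinset Finset.univ
    (fun (p : SOff n) a => χ (β2 a * (2 * cc x y z w s t p.1.1 p.1.2)))]
  rw [Finset.prod_congr rfl (fun i (_ : i ∈ Finset.univ) => sum_chi4 (cc x y z w s t i i)),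
    Finset.prod_congr rfl
      (fun (p : SOff n) (_ : p ∈ Finset.univ) => sum_chi2 (cc x y z w s t p.1.1 p.1.2)),
    prod_ite_all, prod_ite_all, card_An, Fintype.card_fin]
  by_cases h1 : ∀ i, cc x y z w s t i i = 0 <;>
    by_cases h2 : ∀ p : SOff n, 2 * cc x y z w s t p.1.1 p.1.2 = 0 <;>
      simp [h1, h2]


lemma entry_eq (A : Matrix (Fin n) (Fin n) (Fin 4)) :
    kron3 (outer (phiEq A)) ((x, y, z) : Bits n × Bits n × Bits n) ((w, s, t)) =
      Complex.I ^ NN x y z w s t A / 8 ^ n := by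
  have hge : (0 : ℝ) ≤ 2 ^ n := by positivity
  set r : ℂ := ((Real.sqrt (2 ^ n) : ℝ) : ℂ) with hr
  have hr2 : r * r = (2 : ℂ) ^ n := by
    rw [hr, ← Complex.ofReal_mul, Real.mul_self_sqrt hge]
    push_cast
    ring
  have hrne : r ≠ 0 := by
    rw [hr]
    simp only [ne_eq, Complex.ofReal_eq_zero]
    intro hcon
    have := Real.sqrt_eq_zero hge |>.mp hcon
    have h2 : (0:ℝ) < 2 ^ n := by positivity
    linarith
  have hconj : ∀ (m : ℕ), (starRingEnd ℂ) (Complex.I ^ m / r) = Complex.I ^ (3 * m) / r := by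
    intro m
    rw [map_div₀, map_pow, Complex.conj_I, hr, Complex.conj_ofReal,
      show (-Complex.I) = Complex.I ^ 3 by rw [pow_succ, Complex.I_sq, neg_one_mul],
      ← pow_mul]
  show (Complex.I ^ quadA A x / r * (starRingEnd ℂ) (Complex.I ^ quadA A w / r)) *
      (Complex.I ^ quadA A y / r * (starRingEnd ℂ) (Complex.I ^ quadA A s / r)) *
      (Complex.I ^ quadA A z / r * (starRingEnd ℂ) (Complex.I ^ quadA A t / r)) = _
  rw [hconj, hconj, hconj]
  have h8 : (8 : ℂ) ^ n = ((2:ℂ) ^ n) * ((2:ℂ) ^ n) * ((2:ℂ) ^ n) := by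
    rw [← mul_pow, ← mul_pow]; norm_num
  rw [NN, h8, ← hr2]
  field_simp
  ring

lemma rhs_entry :
    (∑ v ∈ Finset.univ.filter (fun v : Fin 6 → Bits n => MemK2 v),
        Matrix.single (v 0, v 1, v 2) (v 3, v 4, v 5) (1 : ℂ))
      ((x, y, z) : Bits n × Bits n × Bits n) ((w, s, t)) =
      if MemK2 ![x, y, z, w, s, t] then 1 else 0 := by
  classical
  rw [Matrix.sum_apply]
  have hiff : ∀ v : Fin 6 → Bits n,
      ((v 0, v 1, v 2) = ((x, y, z) : Bits n × Bits n × Bits n) ∧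
        (v 3, v 4, v 5) = ((w, s, t) : Bits n × Bits n × Bits n)) ↔ v = ![x, y, z, w, s, t] := by
    intro v
    constructor
    · rintro ⟨h1, h2⟩
      rw [Prod.mk.injEq, Prod.mk.injEq] at h1 h2
      funext k
      fin_cases k
      · exact h1.1
      · exact h1.2.1
      · exact h1.2.2
      · exact h2.1
      · exact h2.2.1
      · exact h2.2.2
    · rintro rfl
      exact ⟨rfl, rfl⟩
  have hterm : ∀ v : Fin 6 → Bits n,
      Matrix.single (v 0, v 1, v 2) (v 3, v 4, v 5) (1 : ℂ)
          ((x, y, z) : Bits n × Bits n × Bits n) ((w, s, t)) =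
        if v = ![x, y, z, w, s, t] then 1 else 0 := by
    intro v
    show (if (v 0, v 1, v 2) = ((x, y, z) : Bits n × Bits n × Bits n) ∧
        (v 3, v 4, v 5) = ((w, s, t) : Bits n × Bits n × Bits n) then (1:ℂ) else 0) = _
    exact if_congr (hiff v) rfl rfl
  rw [Finset.sum_congr rfl (fun v _ => hterm v)]
  rw [Finset.sum_ite_eq' _ (![x, y, z, w, s, t]) (fun _ => (1:ℂ))]
  simp only [Finset.mem_filter, Finset.mem_univ, true_and]

lemma cond_iff :
    ((∀ i, cc x y z w s t i i = 0) ∧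
        (∀ p : SOff n, 2 * cc x y z w s t p.1.1 p.1.2 = 0))
      ↔ MemK2 ![x, y, z, w, s, t] := by
  constructor
  · rintro ⟨h1, h2⟩
    have hs : ∀ p, sumEq6 (x p) (y p) (z p) (w p) (s p) (t p) := fun p =>
      (Ldiag (x p) (y p) (z p) (w p) (s p) (t p)).mp (h1 p)
    have hpar : ∀ p q, p ≠ q → par12 (x p) (y p) (z p) (w p) (s p) (t p)
        (x q) (y q) (z q) (w q) (s q) (t q) := by
      intro p q hne
      rcases lt_or_gt_of_ne hne with h | h
      · exact h2 ⟨(p, q), h⟩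
      · show 2 * cc x y z w s t p q = 0
        rw [cc_symm x y z w s t p q]
        exact h2 ⟨(q, p), h⟩
    obtain ⟨π, hπ⟩ := cross x y z w s t hs hpar
    exact ⟨crossToPaired x y z w s t π hπ, fun p => hs p⟩
  · intro h
    refine ⟨fun i => (Ldiag (x i) (y i) (z i) (w i) (s i) (t i)).mpr (h.2 i), fun p => ?_⟩
    exact pairedToPar x y z w s t h.1 p.1.1 p.1.2

lemma card_ne : ((An n).card : ℂ) ≠ 0 := by
  rw [card_An]
  exact mul_ne_zero (pow_ne_zero _ (by norm_num)) (pow_ne_zero _ (by norm_num))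

end Comb
end EspAux

/-- third moment of the complex equatorial stabilizer ensemble,
expressed via the set `𝒦₂`. -/
theorem espovm_third_moment (n : ℕ) (hn : 1 ≤ n) :
    (((An n).card : ℂ))⁻¹ • ∑ A ∈ An n, kron3 (outer (phiEq A)) =
      ((8 : ℂ) ^ n)⁻¹ •
        ∑ v ∈ Finset.univ.filter (fun v : Fin 6 → Bits n => MemK2 v),
          Matrix.single (v 0, v 1, v 2) (v 3, v 4, v 5) (1 : ℂ) := by
  classical
  ext ⟨x, y, z⟩ ⟨w, s, t⟩
  rw [Matrix.smul_apply, Matrix.smul_apply, Matrix.sum_apply, EspAux.rhs_entry x y z w s t]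
  rw [Finset.sum_congr rfl (fun A _ => EspAux.entry_eq x y z w s t A)]
  rw [← Finset.sum_div, EspAux.sum_I_NN x y z w s t]
  by_cases hc : (∀ i, EspAux.cc x y z w s t i i = 0) ∧
      (∀ p : EspAux.SOff n, 2 * EspAux.cc x y z w s t p.1.1 p.1.2 = 0)
  · rw [if_pos hc, if_pos ((EspAux.cond_iff x y z w s t).mp hc)]
    rw [smul_eq_mul, smul_eq_mul, mul_one]
    rw [div_eq_mul_inv, ← mul_assoc, inv_mul_cancel₀ EspAux.card_ne, one_mul]
  · rw [if_neg hc, if_neg (fun hm => hc ((EspAux.cond_iff x y z w s t).mpr hm))]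
    simp
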